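/- Let H be a finite simple graph, n, k ≥ 1 natural numbers, and Y a set of k vertices of H each of degree exactly n in H. Suppose the number of unordered pairs {u,v} ⊆ Y with u ≠ v and {u,v} ∉ E(H) is at most m. Then every set W of unordered pairs of distinct vertices of H, disjoint from E(H), such that every vertex of Y has degree at least n+k−1 in the graph H ∪ W, satisfies |W| ≥ k(k−1) − m. -/

import Mathlib

/-- The degree of a vertex: the number of its neighbors. -/
noncomputable def deg {V : Type*} (G : SimpleGraph V) (v : V) : ℕ :=
  (G.neighborSet v).ncard

/-- Soundness lemma of the Densest-k-Subgraph reduction: if `Y` is a set of `k` vertices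
of degree exactly `n`, with at most `m` non-edges inside `Y`, then any set `W` of added
non-edges raising the degree of every vertex of `Y` to at least `n+k−1` satisfies
`|W| ≥ k(k−1) − m`. -/
theorem stmt_5 {V : Type*} [Fintype V] (H : SimpleGraph V) (n k m : ℕ)
    (hn : 1 ≤ n) (hk : 1 ≤ k)
    (Y : Finset V) (hYcard : Y.card = k) (hYdeg : ∀ y ∈ Y, deg H y = n)
    (hm : {e : Sym2 V | (∀ v ∈ e, v ∈ Y) ∧ ¬ e.IsDiag ∧ e ∉ H.edgeSet}.ncard ≤ m)
    (W : Finset (Sym2 V))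
    (hdiag : ∀ e ∈ W, ¬ e.IsDiag)
    (hnew : ∀ e ∈ W, e ∉ H.edgeSet)
    (hdeg : ∀ y ∈ Y,
      n + k - 1 ≤ deg (H ⊔ SimpleGraph.fromEdgeSet (↑W : Set (Sym2 V))) y) :
    k * (k - 1) - m ≤ W.card := by
  classical
  set G := SimpleGraph.fromEdgeSet (↑W : Set (Sym2 V)) with hG
  -- per-vertex lower bound
  have hlow : ∀ y ∈ Y, k - 1 ≤ (W.filter (fun e => y ∈ e)).card := by
    intro y hy
    have hN : (G.neighborSet y).ncard ≤ (W.filter (fun e => y ∈ e)).card := by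
      have hfin : (G.neighborSet y).Finite := Set.toFinite _
      rw [Set.ncard_eq_toFinset_card' ]
      apply Finset.card_le_card_of_injOn (fun v => s(y, v))
      · intro v hv
        rw [Finset.mem_coe, Set.mem_toFinset] at hv
        have : G.Adj y v := hv
        rw [hG, SimpleGraph.fromEdgeSet_adj] at this
        rw [Finset.mem_coe, Finset.mem_filter]
        exact ⟨this.1, Sym2.mem_mk_left y v⟩
      · intro a ha b hb hab
        simp only [Sym2.eq_iff] at hab
        rcases hab with ⟨-, h⟩ | ⟨h1, h2⟩
        · exact h
        · simp only [Finset.mem_coe, Set.mem_toFinset] at ha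
          have hadj : G.Adj y a := ha
          exact h2.trans h1
    have hsup : deg (H ⊔ G) y ≤ deg H y + (G.neighborSet y).ncard := by
      unfold deg
      have hset : (H ⊔ G).neighborSet y = H.neighborSet y ∪ G.neighborSet y := by
        ext v; simp [SimpleGraph.mem_neighborSet, SimpleGraph.sup_adj]
      rw [hset]
      exact Set.ncard_union_le _ _
    have h1 := hdeg y hy
    have h2 := hYdeg y hy
    omega
  -- double counting
  have hsum : ∑ y ∈ Y, (W.filter (fun e => y ∈ e)).card
      = ∑ e ∈ W, (Y.filter (fun y => y ∈ e)).card := by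
    simp_rw [Finset.card_filter]
    exact Finset.sum_comm
  -- per-edge upper bound
  have hup : ∀ e ∈ W, (Y.filter (fun y => y ∈ e)).card
      ≤ 1 + (if (∀ v ∈ e, v ∈ Y) then 1 else 0) := by
    intro e he
    induction e using Sym2.inductionOn with
    | hf a b =>
      have hab : a ≠ b := by simpa using hdiag _ he
      split_ifs with hall
      · have : (Y.filter (fun y => y ∈ s(a, b))) ⊆ {a, b} := by
          intro y hy
          rw [Finset.mem_filter, Sym2.mem_iff] at hy
          simpa using hy.2
        calc _ ≤ ({a, b} : Finset V).card := Finset.card_le_card this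
          _ ≤ 2 := Finset.card_insert_le _ _ |>.trans (by simp)
      · push_neg at hall
        obtain ⟨v, hv, hvY⟩ := hall
        rw [Sym2.mem_iff] at hv
        rcases hv with rfl | rfl
        · have : (Y.filter (fun y => y ∈ s(v, b))) ⊆ {b} := by
            intro y hy
            rw [Finset.mem_filter, Sym2.mem_iff] at hy
            rcases hy.2 with rfl | rfl
            · exact absurd hy.1 hvY
            · simp
          simpa using Finset.card_le_card this
        · have : (Y.filter (fun y => y ∈ s(a, v))) ⊆ {a} := by
            intro y hy
            rw [Finset.mem_filter, Sym2.mem_iff] at hy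
            rcases hy.2 with rfl | rfl
            · simp
            · exact absurd hy.1 hvY
          simpa using Finset.card_le_card this
  -- W2 bound
  have hW2 : (W.filter (fun e => ∀ v ∈ e, v ∈ Y)).card ≤ m := by
    have hsub : (↑(W.filter (fun e => ∀ v ∈ e, v ∈ Y)) : Set (Sym2 V))
        ⊆ {e : Sym2 V | (∀ v ∈ e, v ∈ Y) ∧ ¬ e.IsDiag ∧ e ∉ H.edgeSet} := by
      intro e he
      simp only [Finset.coe_filter, Set.mem_setOf_eq] at he
      exact ⟨he.2, hdiag _ he.1, hnew _ he.1⟩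
    calc (W.filter (fun e => ∀ v ∈ e, v ∈ Y)).card
        = (↑(W.filter (fun e => ∀ v ∈ e, v ∈ Y)) : Set (Sym2 V)).ncard :=
          (Set.ncard_coe_finset _).symm
      _ ≤ _ := Set.ncard_le_ncard hsub (Set.toFinite _)
      _ ≤ m := hm
  have hmain : k * (k - 1) ≤ W.card + m := by
    have h1 : k * (k - 1) ≤ ∑ y ∈ Y, (W.filter (fun e => y ∈ e)).card := by
      calc k * (k - 1) = ∑ _y ∈ Y, (k - 1) := by
            rw [Finset.sum_const, smul_eq_mul, hYcard]
        _ ≤ _ := Finset.sum_le_sum hlow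
    have h2 : ∑ e ∈ W, (Y.filter (fun y => y ∈ e)).card
        ≤ W.card + (W.filter (fun e => ∀ v ∈ e, v ∈ Y)).card := by
      calc ∑ e ∈ W, (Y.filter (fun y => y ∈ e)).card
          ≤ ∑ e ∈ W, (1 + if (∀ v ∈ e, v ∈ Y) then 1 else 0) :=
            Finset.sum_le_sum hup
        _ = W.card + (W.filter (fun e => ∀ v ∈ e, v ∈ Y)).card := by
            rw [Finset.sum_add_distrib, Finset.sum_const, smul_eq_mul, mul_one,
              Finset.card_filter]
    omega
  omega
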